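/- arXiv:1711.02906 — 4 statements merged into one kernel-verified Lean document; each statement's English description precedes it below -/
import Mathlib

section
/- Consider a formal variable ζ satisfying the degree-d relation ζ^d = Σ_{i=1}^{d} (−1)^{i−1} σ_i^{(d)} h^i ζ^{d−i}, where h is a commuting variable and σ_i^{(d)} = σ_i^{(d)}(k_1,…,k_d). Then for every m ≥ d, ζ^m = Σ_{i=1}^{d} β_{m,i} h^{m−d+i} ζ^{d−i}, where β_{m,i} = Σ_{j=0}^{i−1} (−1)^j σ_j^{(d)} W_{m−d+i−j}^{(d)}. -/
/-- Complete homogeneous (Wronski) symmetric function of degree `δ` in `d` variables. -/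
def wronski {R : Type*} [CommSemiring R] (d δ : ℕ) (k : Fin d → R) : R :=
  ∑ a ∈ Finset.Nat.antidiagonalTuple d δ, ∏ j, k j ^ a j

/-- Elementary symmetric function of degree `i` in `d` variables. -/
def esymm {R : Type*} [CommSemiring R] (d i : ℕ) (k : Fin d → R) : R :=
  ∑ s ∈ (Finset.univ : Finset (Fin d)).powersetCard i, ∏ j ∈ s, k j

/-- `β_{m,i} = ∑_{j=0}^{i−1} (−1)^j σ_j W_{m−d+i−j}`. -/
def beta {R : Type*} [CommRing R] (d : ℕ) (k : Fin d → R) (m i : ℕ) : R :=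
  ∑ j ∈ Finset.range i, (-1 : R) ^ j * esymm d j k * wronski d (m - d + i - j) k

open Finset

section aux
variable {R : Type*} [CommRing R] (d : ℕ) (k : Fin d → R)

lemma geom_unit (a : R) :
    (1 - PowerSeries.C a * PowerSeries.X) * PowerSeries.mk (fun n => a ^ n) = 1 := by
  ext n
  cases n with
  | zero => simp
  | succ n =>
    rw [sub_mul, one_mul, map_sub, mul_assoc, PowerSeries.coeff_C_mul,
      PowerSeries.coeff_succ_X_mul]
    simp [pow_succ, mul_comm]

lemma coeffH (δ : ℕ) :
    PowerSeries.coeff δ (∏ l : Fin d, PowerSeries.mk fun n => k l ^ n) = wronski d δ k := by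
  rw [PowerSeries.coeff_prod]
  simp only [PowerSeries.coeff_mk]
  unfold wronski
  refine Finset.sum_nbij' (fun l => ⇑l) (fun f => Finsupp.equivFunOnFinite.symm f) ?_ ?_ ?_ ?_ ?_
  · intro l hl
    rw [Finset.mem_finsuppAntidiag] at hl
    rw [Finset.Nat.mem_antidiagonalTuple]
    exact hl.1
  · intro f hf
    rw [Finset.Nat.mem_antidiagonalTuple] at hf
    rw [Finset.mem_finsuppAntidiag]
    exact ⟨hf, Finset.subset_univ _⟩
  · intro l _; exact Finsupp.equivFunOnFinite.symm_apply_apply l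
  · intro f _; exact Finsupp.equivFunOnFinite.apply_symm_apply f
  · intro l _; rfl

lemma coeff_one_sub_C_mul_X (a : R) (n : ℕ) :
    PowerSeries.coeff n (1 - PowerSeries.C a * PowerSeries.X) =
      if n = 0 then 1 else if n = 1 then -a else 0 := by
  rw [map_sub, PowerSeries.coeff_C_mul, PowerSeries.coeff_X, PowerSeries.coeff_one]
  rcases n with _ | _ | n <;> simp

lemma support_one {d i : ℕ} (l : Fin d →₀ ℕ)
    (hl : ∀ t, l t ≤ 1) (hs : Finset.univ.sum ⇑l = i) : #l.support = i := by
  have h1 : ∀ t ∈ l.support, l t = 1 := by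
    intro t ht
    have := hl t
    rw [Finsupp.mem_support_iff] at ht
    omega
  calc #l.support = ∑ t ∈ l.support, l t := by
        rw [Finset.sum_congr rfl h1]; simp
    _ = ∑ t ∈ Finset.univ, l t := Finset.sum_subset (Finset.subset_univ _)
        (fun t _ ht => Finsupp.notMem_support_iff.mp ht)
    _ = i := hs

lemma coeffE (i : ℕ) :
    PowerSeries.coeff i (∏ l : Fin d, (1 - PowerSeries.C (k l) * PowerSeries.X)) =
      (-1 : R) ^ i * esymm d i k := by
  classical
  rw [PowerSeries.coeff_prod]
  simp only [coeff_one_sub_C_mul_X]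
  rw [← Finset.sum_filter_add_sum_filter_not _ (fun l : Fin d →₀ ℕ => ∀ t, l t ≤ 1)]
  have h2 : ∑ l ∈ (finsuppAntidiag univ i).filter (fun l : Fin d →₀ ℕ => ¬ ∀ t, l t ≤ 1),
      ∏ t : Fin d, (if l t = 0 then (1:R) else if l t = 1 then -k t else 0) = 0 := by
    refine Finset.sum_eq_zero fun l hl => ?_
    rw [Finset.mem_filter] at hl
    push_neg at hl
    obtain ⟨t, ht⟩ := hl.2
    refine Finset.prod_eq_zero (Finset.mem_univ t) ?_
    rw [if_neg (by omega), if_neg (by omega)]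
  rw [h2, add_zero, esymm, Finset.mul_sum]
  refine Finset.sum_nbij' (fun l => l.support)
    (fun S => Finsupp.equivFunOnFinite.symm (fun t => if t ∈ S then 1 else 0)) ?_ ?_ ?_ ?_ ?_
  · intro l hl
    rw [Finset.mem_filter, Finset.mem_finsuppAntidiag] at hl
    rw [Finset.mem_powersetCard]
    exact ⟨Finset.subset_univ _, support_one l hl.2 hl.1.1⟩
  · intro S hS
    rw [Finset.mem_powersetCard] at hS
    rw [Finset.mem_filter, Finset.mem_finsuppAntidiag]
    refine ⟨⟨?_, Finset.subset_univ _⟩, ?_⟩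
    · simp only [Finsupp.coe_equivFunOnFinite_symm]
      rw [Finset.sum_ite_mem, Finset.univ_inter, ← hS.2]
      simp
    · intro t
      simp only [Finsupp.coe_equivFunOnFinite_symm]
      split <;> omega
  · intro l hl
    rw [Finset.mem_filter, Finset.mem_finsuppAntidiag] at hl
    have h1 : ∀ t ∈ l.support, l t = 1 := by
      intro t ht
      have := hl.2 t
      rw [Finsupp.mem_support_iff] at ht
      omega
    ext t
    simp only [Finsupp.coe_equivFunOnFinite_symm]
    split_ifs with h
    · exact (h1 t h).symm
    · exact (Finsupp.notMem_support_iff.mp h).symm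
  · intro S hS
    ext t
    simp [Finsupp.mem_support_iff, Finsupp.coe_equivFunOnFinite_symm]
  · intro l hl
    rw [Finset.mem_filter, Finset.mem_finsuppAntidiag] at hl
    have h1 : ∀ t ∈ l.support, l t = 1 := by
      intro t ht
      have := hl.2 t
      rw [Finsupp.mem_support_iff] at ht
      omega
    have hcard : #l.support = i := support_one l hl.2 hl.1.1
    calc ∏ t : Fin d, (if l t = 0 then (1:R) else if l t = 1 then -k t else 0)
        = ∏ t ∈ l.support, (if l t = 0 then (1:R) else if l t = 1 then -k t else 0) := by
          refine (Finset.prod_subset (Finset.subset_univ _) fun t _ ht => ?_).symm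
          rw [Finsupp.notMem_support_iff] at ht
          simp [ht]
      _ = ∏ t ∈ l.support, (-1 : R) * k t := by
          refine Finset.prod_congr rfl fun t ht => ?_
          rw [if_neg (by have := h1 t ht; omega), if_pos (h1 t ht), neg_one_mul]
      _ = (-1 : R) ^ i * ∏ t ∈ l.support, k t := by
          rw [Finset.prod_mul_distrib, Finset.prod_const, hcard]

lemma key : ∀ i : ℕ, 1 ≤ i →
    ∑ j ∈ Finset.range (i + 1), (-1 : R) ^ j * esymm d j k * wronski d (i - j) k = 0 := by
  intro i hi
  have hu : (∏ l : Fin d, (1 - PowerSeries.C (k l) * PowerSeries.X)) *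
      (∏ l : Fin d, PowerSeries.mk fun n => k l ^ n) = 1 := by
    rw [← Finset.prod_mul_distrib]
    exact Finset.prod_eq_one fun l _ => geom_unit (k l)
  have h := congrArg (PowerSeries.coeff i) hu
  rw [PowerSeries.coeff_mul, PowerSeries.coeff_one, if_neg (by omega),
    Finset.Nat.sum_antidiagonal_eq_sum_range_succ_mk] at h
  simp only [coeffE, coeffH] at h
  exact h

lemma esymm_zero' : esymm d 0 k = 1 := by simp [esymm]

lemma esymm_of_gt {j : ℕ} (hj : d < j) : esymm d j k = 0 := by
  rw [esymm, Finset.powersetCard_eq_empty.mpr (by simpa using hj), Finset.sum_empty]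

lemma wronski_zero' : wronski d 0 k = 1 := by
  simp [wronski, Finset.Nat.antidiagonalTuple_zero_right]

lemma beta_one (m : ℕ) : beta d k m 1 = wronski d (m - d + 1) k := by
  simp [beta, esymm_zero']

lemma beta_base {i : ℕ} (hi : 1 ≤ i) : beta d k d i = (-1 : R) ^ (i - 1) * esymm d i k := by
  obtain ⟨i, rfl⟩ : ∃ i', i = i' + 1 := ⟨i - 1, by omega⟩
  have hk := key d k (i + 1) (by omega)
  rw [Finset.sum_range_succ] at hk
  have hd : ∀ j, d - d + (i + 1) - j = i + 1 - j := by intro j; omega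
  rw [beta]
  simp only [hd]
  have h0 : i + 1 - (i + 1) = 0 := by omega
  rw [h0, wronski_zero', mul_one] at hk
  have hs : (-1 : R) ^ (i + 1 - 1) = -(-1 : R) ^ (i + 1) := by
    simp [pow_succ]
  rw [hs]
  linear_combination hk

lemma beta_top {m : ℕ} (hm : d ≤ m) : beta d k m (d + 1) = 0 := by
  have hk := key d k (m + 1) (by omega)
  rw [beta]
  have hd : ∀ j, m - d + (d + 1) - j = m + 1 - j := by intro j; omega
  simp only [hd]
  rw [← hk]
  have hsub : Finset.range (d + 1) ⊆ Finset.range (m + 1 + 1) :=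
    Finset.range_subset_range.mpr (by omega)
  refine (Finset.sum_subset (f := fun j => (-1 : R) ^ j * esymm d j k * wronski d (m + 1 - j) k)
    hsub fun j hj hj' => ?_)
  rw [Finset.mem_range] at hj hj'
  rw [esymm_of_gt d k (by omega)]
  ring

lemma beta_succ {m i : ℕ} (hm : d ≤ m) (hi : 1 ≤ i) :
    beta d k (m + 1) i =
      beta d k m (i + 1) + (-1 : R) ^ (i - 1) * esymm d i k * beta d k m 1 := by
  rw [beta_one]
  have h1 : beta d k m (i + 1) =
      beta d k (m + 1) i + (-1 : R) ^ i * esymm d i k * wronski d (m - d + 1) k := by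
    rw [beta, Finset.sum_range_succ, beta]
    have e1 : m - d + (i + 1) - i = m - d + 1 := by omega
    have e2 : ∀ j, m - d + (i + 1) - j = m + 1 - d + i - j := by intro j; omega
    rw [e1]
    congr 1
    exact Finset.sum_congr rfl fun j _ => by rw [e2 j]
  have hs : (-1 : R) ^ (i - 1) = -(-1 : R) ^ i := by
    obtain ⟨i', rfl⟩ : ∃ i', i = i' + 1 := ⟨i - 1, by omega⟩
    simp [pow_succ]
  rw [hs]
  linear_combination -h1

end aux

/-- If `ζ` satisfies `ζ^d = ∑_{i=1}^{d} (−1)^{i−1} σ_i h^i ζ^{d−i}`, then for every `m ≥ d`,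
`ζ^m = ∑_{i=1}^{d} β_{m,i} h^{m−d+i} ζ^{d−i}`. -/
theorem stmt7 {R : Type*} [CommRing R] (d : ℕ) (hd : 1 ≤ d) (k : Fin d → R) (ζ h : R)
    (hrel : ζ ^ d = ∑ i ∈ Finset.Icc 1 d,
      (-1 : R) ^ (i - 1) * esymm d i k * h ^ i * ζ ^ (d - i)) :
    ∀ m, d ≤ m →
      ζ ^ m = ∑ i ∈ Finset.Icc 1 d, beta d k m i * h ^ (m - d + i) * ζ ^ (d - i) := by
  intro m hm
  obtain ⟨t, rfl⟩ : ∃ t, m = d + t := ⟨m - d, by omega⟩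
  clear hm
  induction t with
  | zero =>
    simp only [Nat.add_zero]
    rw [hrel]
    refine Finset.sum_congr rfl fun i hi => ?_
    rw [Finset.mem_Icc] at hi
    rw [beta_base d k hi.1]
    have : d - d + i = i := by omega
    rw [this]
  | succ t ih =>
    have hnorm : ∀ i : ℕ, d + t - d + i = t + i := fun i => by omega
    have hnorm' : ∀ i : ℕ, d + (t + 1) - d + i = t + 1 + i := fun i => by omega
    simp only [hnorm] at ih
    simp only [hnorm']
    have hsplit1 : Finset.Icc 1 d = insert 1 (Finset.Icc 2 d) := by
      ext a; simp only [Finset.mem_Icc, Finset.mem_insert]; omega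
    have hsplit2 : Finset.Icc 1 d = insert d (Finset.Icc 1 (d - 1)) := by
      ext a; simp only [Finset.mem_Icc, Finset.mem_insert]; omega
    have hstep : ζ ^ (d + (t + 1)) = ζ ^ (d + t) * ζ := pow_succ ζ (d + t)
    rw [hstep, ih, Finset.sum_mul]
    have hms : d ≤ d + t := by omega
    have hd1 : d - 1 + 1 = d := by omega
    calc ∑ i ∈ Finset.Icc 1 d, beta d k (d + t) i * h ^ (t + i) * ζ ^ (d - i) * ζ
        = (∑ i ∈ Finset.Icc 2 d, beta d k (d + t) i * h ^ (t + i) * ζ ^ (d - i + 1))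
          + beta d k (d + t) 1 * h ^ (t + 1) * ζ ^ d := by
          rw [hsplit1, Finset.sum_insert (by simp), add_comm]
          congr 1
          · exact Finset.sum_congr rfl fun i hi => by rw [pow_succ ζ (d - i)]; ring
          · have hz : ζ ^ (d - 1) * ζ = ζ ^ d := by rw [← pow_succ, hd1]
            rw [← hz]; ring
      _ = (∑ i ∈ Finset.Icc 1 (d - 1), beta d k (d + t) (i + 1) * h ^ (t + 1 + i) * ζ ^ (d - i))
          + ∑ i ∈ Finset.Icc 1 d,
              (-1 : R) ^ (i - 1) * esymm d i k * beta d k (d + t) 1 * h ^ (t + 1 + i)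
              * ζ ^ (d - i) := by
          congr 1
          · refine Finset.sum_nbij' (fun a => a - 1) (fun a => a + 1) ?_ ?_ ?_ ?_ ?_
            · intro a ha; simp only [Finset.mem_Icc] at ha ⊢; omega
            · intro a ha; simp only [Finset.mem_Icc] at ha ⊢; omega
            · intro a ha; simp only [Finset.mem_Icc] at ha; omega
            · intro a ha; simp only [Finset.mem_Icc] at ha; omega
            · intro a ha
              simp only [Finset.mem_Icc] at ha
              have e1 : a - 1 + 1 = a := by omega
              have e2 : t + 1 + (a - 1) = t + a := by omega
              have e3 : d - (a - 1) = d - a + 1 := by omega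
              rw [e1, e2, e3]
          · rw [hrel, Finset.mul_sum]
            refine Finset.sum_congr rfl fun i hi => ?_
            rw [pow_add h (t + 1) i]
            ring
      _ = ∑ i ∈ Finset.Icc 1 d, beta d k (d + (t + 1)) i * h ^ (t + 1 + i) * ζ ^ (d - i) := by
          have hrw : ∑ i ∈ Finset.Icc 1 d, beta d k (d + (t + 1)) i * h ^ (t + 1 + i) * ζ ^ (d - i)
              = ∑ i ∈ Finset.Icc 1 d,
                  (beta d k (d + t) (i + 1)
                    + (-1 : R) ^ (i - 1) * esymm d i k * beta d k (d + t) 1)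
                  * h ^ (t + 1 + i) * ζ ^ (d - i) := by
            refine Finset.sum_congr rfl fun i hi => ?_
            rw [Finset.mem_Icc] at hi
            rw [show d + (t + 1) = d + t + 1 from rfl, beta_succ d k hms hi.1]
          rw [hrw]
          simp only [add_mul, Finset.sum_add_distrib]
          congr 1
          rw [hsplit2, Finset.sum_insert (by simp only [Finset.mem_Icc]; omega),
            beta_top d k hms]
          simp
end

section
/- Fix integers n ≥ d ≥ 2 and an integer k ≥ 1, and set ℓ = k−1. Define ν_n = − Σ_{m=0}^{n−d} Σ_{j=0}^{n−d−m} Σ_{i=0}^{m} (−1)^{n−d−i−j} (ℓ^{i−1}/(i! j!)) Ψ_n^{(i+j)}(ℓ) C(n−m−j−1, d−1), where Ψ_n(x) = (1+x)^d x^{n+1−d}. Then ν_n = −(k^d + k^{d+1} + ⋯ + k^n). -/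
open Polynomial

section Stmt12Aux

/-- Partial alternating sum of binomials. -/
lemma lem_alt (d : ℕ) : ∀ j : ℕ, ∑ s ∈ Finset.range (j+1), (-1:ℝ)^s * ((d+1).choose s) = (-1)^j * (d.choose j) := by
  intro j
  induction j with
  | zero => simp
  | succ j ih =>
    rw [Finset.sum_range_succ, ih, Nat.choose_succ_succ' d j]
    push_cast
    ring

/-- Key alternating convolution identity. -/
lemma lem_F (d : ℕ) : ∀ m : ℕ, ∑ s ∈ Finset.range (m+1), (-1:ℝ)^s * (d.choose s) * ((d+m-s).choose d) = 1 := by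
  induction d with
  | zero =>
    intro m
    rw [Finset.sum_eq_single 0]
    · simp
    · intro b hb hb0
      simp [Nat.choose_eq_zero_of_lt (Nat.pos_of_ne_zero hb0)]
    · simp
  | succ d ih =>
    intro m
    have hock : ∀ s ∈ Finset.range (m+1),
        (-1:ℝ)^s * ((d+1).choose s) * (((d+1)+m-s).choose (d+1))
        = ∑ t ∈ Finset.range (m-s+1), (-1:ℝ)^s * ((d+1).choose s) * ((d+t).choose d) := by
      intro s hs
      rw [Finset.mem_range] at hs
      have hs' : s ≤ m := by omega
      have h1 : (d+1)+m-s = (d + (m-s)) + 1 := by omega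
      have h2 : ((d + (m-s) + 1).choose (d+1) : ℕ) = ∑ i ∈ Finset.Icc d (d + (m-s)), i.choose d := by
        rw [Nat.sum_Icc_choose]
      have h3 : ∑ i ∈ Finset.Icc d (d + (m-s)), i.choose d
          = ∑ t ∈ Finset.range (m-s+1), (d+t).choose d := by
        rw [show Finset.Icc d (d + (m-s)) = Finset.Ico d (d + (m-s) + 1) by
              rw [Finset.Ico_add_one_right_eq_Icc], Finset.sum_Ico_eq_sum_range]
        apply Finset.sum_congr (by congr 1; omega)
        intro t _
        rw [Nat.add_comm d t]
      rw [h1, h2, h3]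
      push_cast
      rw [Finset.mul_sum]
    rw [Finset.sum_congr rfl hock]
    rw [Finset.sum_comm' (t' := Finset.range (m+1)) (s' := fun t => Finset.range (m-t+1))
      (by intro s t; simp only [Finset.mem_range]; omega)]
    have inner : ∀ t ∈ Finset.range (m+1),
        ∑ s ∈ Finset.range (m-t+1), (-1:ℝ)^s * ((d+1).choose s) * ((d+t).choose d)
        = (-1)^(m-t) * (d.choose (m-t)) * ((d+t).choose d) := by
      intro t ht
      rw [← Finset.sum_mul, lem_alt]
    rw [Finset.sum_congr rfl inner]
    rw [← Finset.sum_range_reflect]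
    simp only [Nat.add_sub_cancel]
    have : ∀ j ∈ Finset.range (m+1),
        (-1:ℝ)^(m-(m-j)) * (d.choose (m-(m-j))) * ((d+(m-j)).choose d)
        = (-1)^j * (d.choose j) * ((d+m-j).choose d) := by
      intro j hj
      rw [Finset.mem_range] at hj
      have h1 : m-(m-j) = j := by omega
      have h2 : d+(m-j) = d+m-j := by omega
      rw [h1, h2]
    rw [Finset.sum_congr rfl this, ih]

lemma lem_collapse (n d : ℕ) (hd : 1 ≤ d) (hdn : d ≤ n) :
    ∑ u ∈ Finset.range (n-d+1),
      ((-1:ℝ)^(n-d-u) * ((n+1-d).choose u)) • ((1+X:ℝ[X])^(d+u) * X^(n+1-d-u))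
    = (1+X)^(n+1) - (1+X)^d := by
  have hM1 : n+1-d = (n-d)+1 := by omega
  rw [hM1]
  set N := n - d with hN
  have hbin : ((1+X:ℝ[X]) + (-X))^(N+1) = ∑ u ∈ Finset.range (N+1+1),
      (1+X:ℝ[X])^u * (-X)^(N+1-u) * ((N+1).choose u : ℝ[X]) := add_pow _ _ _
  have h1 : ((1+X:ℝ[X]) + (-X))^(N+1) = 1 := by
    have : (1+X:ℝ[X]) + (-X) = 1 := by ring
    rw [this, one_pow]
  rw [h1, Finset.sum_range_succ] at hbin
  simp only [Nat.sub_self, pow_zero, mul_one, Nat.choose_self, Nat.cast_one] at hbin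
  have hsum : ∑ u ∈ Finset.range (N+1), (1+X:ℝ[X])^u * (-X)^(N+1-u) * ((N+1).choose u : ℝ[X])
      = 1 - (1+X)^(N+1) := by linear_combination -hbin
  calc ∑ u ∈ Finset.range (N+1),
      ((-1:ℝ)^(N-u) * ((N+1).choose u)) • ((1+X:ℝ[X])^(d+u) * X^(N+1-u))
      = ∑ u ∈ Finset.range (N+1),
        (-(1+X:ℝ[X])^d) * ((1+X)^u * (-X)^(N+1-u) * ((N+1).choose u : ℝ[X])) := by
        apply Finset.sum_congr rfl
        intro u hu
        rw [Finset.mem_range] at hu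
        have h2 : N + 1 - u = (N-u)+1 := by omega
        have h3 : (-X:ℝ[X])^(N+1-u) = -(C ((-1:ℝ)^(N-u)) * X^(N+1-u)) := by
          rw [h2, neg_pow, pow_succ]
          simp only [map_pow, map_neg, map_one]
          ring
        rw [h3, pow_add, smul_eq_C_mul]
        simp only [map_mul, map_pow, map_neg, map_one, map_natCast]
        ring
    _ = (-(1+X:ℝ[X])^d) * (1 - (1+X)^(N+1)) := by rw [← Finset.mul_sum, hsum]
    _ = (1+X)^(n+1) - (1+X)^d := by
        have : (1+X:ℝ[X])^d * (1+X)^(N+1) = (1+X)^(n+1) := by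
          rw [← pow_add]
          congr 1
          omega
        linear_combination this

lemma tri_swap {β : Type*} [AddCommMonoid β] (N : ℕ) (f : ℕ → ℕ → β) :
    ∑ r ∈ Finset.range (N+1), ∑ k ∈ Finset.range (r+1), f r k
    = ∑ k ∈ Finset.range (N+1), ∑ s ∈ Finset.range (N-k+1), f (k+s) k := by
  rw [Finset.sum_sigma' (Finset.range (N+1)) (fun r => Finset.range (r+1)) (fun r k => f r k),
      Finset.sum_sigma' (Finset.range (N+1)) (fun k => Finset.range (N-k+1))
        (fun k s => f (k+s) k)]
  apply Finset.sum_nbij' (fun p => ⟨p.2, p.1 - p.2⟩) (fun p => ⟨p.1 + p.2, p.1⟩)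
  · rintro ⟨r, k⟩ h
    simp only [Finset.mem_sigma, Finset.mem_range] at h ⊢
    omega
  · rintro ⟨k, s⟩ h
    simp only [Finset.mem_sigma, Finset.mem_range] at h ⊢
    omega
  · rintro ⟨r, k⟩ h
    simp only [Finset.mem_sigma, Finset.mem_range] at h
    have h1 : k + (r - k) = r := by omega
    simp [h1]
  · rintro ⟨k, s⟩ h
    simp only [Finset.mem_sigma, Finset.mem_range] at h
    have h1 : (k + s) - k = s := by omega
    simp [h1]
  · rintro ⟨r, k⟩ h
    simp only [Finset.mem_sigma, Finset.mem_range] at h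
    have : k + (r - k) = r := by omega
    rw [this]

lemma lem_F' (d m : ℕ) : ∑ s ∈ Finset.range (m+1),
    (-1:ℝ)^(m-s) * (d.choose s) * ((d+m-s).choose d) = (-1)^m := by
  have : ∀ s ∈ Finset.range (m+1), (-1:ℝ)^(m-s) * (d.choose s) * ((d+m-s).choose d)
      = (-1:ℝ)^m * ((-1:ℝ)^s * (d.choose s) * ((d+m-s).choose d)) := by
    intro s hs
    rw [Finset.mem_range] at hs
    have h1 : (-1:ℝ)^(m-s) * (-1:ℝ)^s = (-1:ℝ)^m := by
      rw [← pow_add]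
      congr 1
      omega
    have h2 : (-1:ℝ)^(m-s) = (-1:ℝ)^m * (-1:ℝ)^s := by
      have hs2 : ((-1:ℝ)^s)^2 = 1 := by
        rw [← pow_mul, mul_comm, pow_mul]
        simp
      calc (-1:ℝ)^(m-s) = (-1:ℝ)^(m-s) * ((-1:ℝ)^s * (-1:ℝ)^s) := by
            rw [show (-1:ℝ)^s * (-1:ℝ)^s = ((-1:ℝ)^s)^2 by ring, hs2, mul_one]
        _ = (-1:ℝ)^m * (-1:ℝ)^s := by rw [← mul_assoc, h1]
    rw [h2]; ring
  rw [Finset.sum_congr rfl this, ← Finset.mul_sum, lem_F, mul_one]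

lemma lem_scalar (n d k s : ℕ) (hd : 1 ≤ d) (hdn : d ≤ n) (hks : k + s ≤ n - d) (hsd : s ≤ d) :
    ((-1:ℝ)^(n-d-(k+s)) * ((n-(k+s)).choose d) / (k+s).factorial * ((k+s).choose k)
      * (d.descFactorial s) * ((n+1-d).descFactorial k))
    = (-1:ℝ)^(n-d-k-s) * ((d+(n-d-k)-s).choose d) * (d.choose s) * ((n+1-d).choose k) := by
  have h1 : n-d-(k+s) = n-d-k-s := by omega
  have h2 : n-(k+s) = d+(n-d-k)-s := by omega
  have hnat : (k+s).choose k * k.factorial * s.factorial = (k+s).factorial := by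
    have := Nat.choose_mul_factorial_mul_factorial (show k ≤ k+s by omega)
    simpa using this
  have hdF1 : d.descFactorial s = s.factorial * d.choose s :=
    Nat.descFactorial_eq_factorial_mul_choose d s
  have hdF2 : (n+1-d).descFactorial k = k.factorial * (n+1-d).choose k :=
    Nat.descFactorial_eq_factorial_mul_choose (n+1-d) k
  rw [h1, h2, hdF1, hdF2]
  have hnatR : ((k+s).choose k : ℝ) * k.factorial * s.factorial = (k+s).factorial := by
    exact_mod_cast congrArg (Nat.cast : ℕ → ℝ) hnat
  have hfac : ((k+s).factorial : ℝ) ≠ 0 := by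
    exact_mod_cast (k+s).factorial_ne_zero
  field_simp
  push_cast
  linear_combination (((d+(n-d-k)-s).choose d) * (d.choose s)
    * ((n+1-d).choose k)) * hnatR

lemma lem_key (n d : ℕ) (hd : 1 ≤ d) (hdn : d ≤ n) :
    ∑ r ∈ Finset.range (n-d+1),
      ((-1:ℝ)^(n-d-r) * ((n-r).choose d) / r.factorial) •
        ((1+X:ℝ[X])^r * derivative^[r] ((1+X)^d * X^(n+1-d)))
    = (1+X)^(n+1) - (1+X)^d := by
  have h1X : (1+X:ℝ[X]) = X + C 1 := by rw [C_1, add_comm]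
  have expand : ∀ r ∈ Finset.range (n-d+1),
      ((-1:ℝ)^(n-d-r) * ((n-r).choose d) / r.factorial) •
        ((1+X:ℝ[X])^r * derivative^[r] ((1+X)^d * X^(n+1-d)))
      = ∑ k ∈ Finset.range (r+1),
          ((-1:ℝ)^(n-d-r) * ((n-r).choose d) / r.factorial * (r.choose k)
            * (d.descFactorial (r-k)) * ((n+1-d).descFactorial k)) •
            ((1+X:ℝ[X])^(r + (d-(r-k))) * X^(n+1-d-k)) := by
    intro r hr
    rw [iterate_derivative_mul, Finset.mul_sum, Finset.smul_sum]
    apply Finset.sum_congr rfl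
    intro k hk
    rw [h1X, iterate_derivative_X_add_pow, iterate_derivative_X_pow_eq_smul, ← h1X]
    simp only [smul_eq_C_mul, nsmul_eq_mul, map_mul, map_pow, map_natCast, map_neg, map_one,
      map_div₀]
    rw [pow_add]
    push_cast
    ring
  rw [Finset.sum_congr rfl expand, tri_swap]
  have inner : ∀ k ∈ Finset.range (n-d+1),
      ∑ s ∈ Finset.range (n-d-k+1),
        ((-1:ℝ)^(n-d-(k+s)) * ((n-(k+s)).choose d) / (k+s).factorial * ((k+s).choose k)
          * (d.descFactorial ((k+s)-k)) * ((n+1-d).descFactorial k)) •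
          ((1+X:ℝ[X])^((k+s) + (d-((k+s)-k))) * X^(n+1-d-k))
      = ((-1:ℝ)^(n-d-k) * ((n+1-d).choose k)) • ((1+X:ℝ[X])^(d+k) * X^(n+1-d-k)) := by
    intro k hk
    rw [Finset.mem_range] at hk
    have congr1 : ∀ s ∈ Finset.range (n-d-k+1),
        ((-1:ℝ)^(n-d-(k+s)) * ((n-(k+s)).choose d) / (k+s).factorial * ((k+s).choose k)
          * (d.descFactorial ((k+s)-k)) * ((n+1-d).descFactorial k)) •
          ((1+X:ℝ[X])^((k+s) + (d-((k+s)-k))) * X^(n+1-d-k))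
        = ((-1:ℝ)^(n-d-k-s) * ((d+(n-d-k)-s).choose d) * (d.choose s) * ((n+1-d).choose k)) •
            ((1+X:ℝ[X])^(d+k) * X^(n+1-d-k)) := by
      intro s hs
      rw [Finset.mem_range] at hs
      have hks : k + s ≤ n - d := by omega
      have hkk : (k+s) - k = s := by omega
      rw [hkk]
      by_cases hsd : s ≤ d
      · have hexp : (k+s) + (d-s) = d+k := by omega
        rw [hexp, lem_scalar n d k s hd hdn hks hsd]
      · have hz1 : d.descFactorial s = 0 := by
          rw [Nat.descFactorial_eq_zero_iff_lt]
          omega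
        have hz2 : d.choose s = 0 := by
          apply Nat.choose_eq_zero_of_lt
          omega
        rw [hz1, hz2]
        push_cast
        simp
    rw [Finset.sum_congr rfl congr1, ← Finset.sum_smul]
    congr 1
    have factor : ∀ s ∈ Finset.range (n-d-k+1),
        (-1:ℝ)^(n-d-k-s) * ((d+(n-d-k)-s).choose d) * (d.choose s) * ((n+1-d).choose k)
        = ((-1:ℝ)^((n-d-k)-s) * (d.choose s) * ((d+(n-d-k)-s).choose d)) * ((n+1-d).choose k) := by
      intro s hs
      ring
    rw [Finset.sum_congr rfl factor, ← Finset.sum_mul, lem_F']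
  rw [Finset.sum_congr rfl inner]
  exact lem_collapse n d hd hdn

lemma tri_swap2 {β : Type*} [AddCommMonoid β] (N : ℕ) (f : ℕ → ℕ → β) :
    ∑ k ∈ Finset.range (N+1), ∑ s ∈ Finset.range (N-k+1), f k s
    = ∑ r ∈ Finset.range (N+1), ∑ k ∈ Finset.range (r+1), f k (r-k) := by
  rw [tri_swap N (fun r k => f k (r-k))]
  apply Finset.sum_congr rfl
  intro k _
  apply Finset.sum_congr rfl
  intro s _
  have h : k + s - k = s := by omega
  rw [h]

lemma lem_hockey (n d i j : ℕ) (hd : 2 ≤ d) (hdn : d ≤ n) (hij : i + j ≤ n - d) :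
    ∑ m ∈ Finset.Icc i (n-d-j), (n-m-j-1).choose (d-1) = (n-i-j).choose d := by
  have key : ∑ m ∈ Finset.Icc i (n-d-j), ((n-m-j-1).choose (d-1))
      = ∑ s ∈ Finset.Icc (d-1) (n-i-j-1), s.choose (d-1) := by
    apply Finset.sum_nbij' (fun m => n-m-j-1) (fun s => n-s-j-1)
    · intro a ha
      simp only [Finset.mem_Icc] at ha ⊢
      omega
    · intro a ha
      simp only [Finset.mem_Icc] at ha ⊢
      omega
    · intro a ha
      simp only [Finset.mem_Icc] at ha
      omega
    · intro a ha
      simp only [Finset.mem_Icc] at ha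
      omega
    · intro a _
      rfl
  rw [key, Nat.sum_Icc_choose]
  congr 1
  · omega
  · omega

lemma lem_binom (x : ℝ) (r : ℕ) :
    ∑ j ∈ Finset.range (r+1), x^(r-j) / ((r-j).factorial * j.factorial)
    = (x+1)^r / r.factorial := by
  rw [← Finset.sum_range_reflect]
  have h1 : ∀ j ∈ Finset.range (r+1),
      x^(r-(r+1-1-j)) / ((r-(r+1-1-j)).factorial * (r+1-1-j).factorial)
      = x^j * (r.choose j) / r.factorial := by
    intro j hj
    rw [Finset.mem_range] at hj
    have h2 : r+1-1-j = r-j := by omega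
    have h3 : r-(r-j) = j := by omega
    rw [h2, h3]
    have h4 : r.choose j * j.factorial * (r-j).factorial = r.factorial :=
      Nat.choose_mul_factorial_mul_factorial (by omega)
    have h4R : (r.choose j : ℝ) * j.factorial * (r-j).factorial = r.factorial := by
      exact_mod_cast congrArg (Nat.cast : ℕ → ℝ) h4
    have hj1 : (j.factorial : ℝ) ≠ 0 := by exact_mod_cast j.factorial_ne_zero
    have hj2 : ((r-j).factorial : ℝ) ≠ 0 := by exact_mod_cast (r-j).factorial_ne_zero
    have hj3 : (r.factorial : ℝ) ≠ 0 := by exact_mod_cast r.factorial_ne_zero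
    field_simp
    linear_combination -x^j * h4R
  rw [Finset.sum_congr rfl h1]
  rw [add_pow]
  rw [Finset.sum_div]
  apply Finset.sum_congr rfl
  intro j _
  rw [one_pow, mul_one]

lemma lem_geom (n d : ℕ) (hdn : d ≤ n) :
    X * ∑ t ∈ Finset.Icc d n, (1+X:ℝ[X])^t = (1+X)^(n+1) - (1+X)^d := by
  have h1 : Finset.Icc d n = Finset.Ico d (n+1) := by rw [Finset.Ico_add_one_right_eq_Icc]
  rw [h1, Finset.sum_Ico_eq_sub _ (by omega)]
  have g1 := geom_sum_mul (1+X:ℝ[X]) (n+1)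
  have g2 := geom_sum_mul (1+X:ℝ[X]) d
  have hx : (1+X:ℝ[X]) - 1 = X := by ring
  rw [hx] at g1 g2
  linear_combination g1 - g2

lemma lem_coeff0 (n d r : ℕ) (hdn : d ≤ n) (hr : r ≤ n - d) :
    (derivative^[r] ((1+X:ℝ[X])^d * X^(n+1-d))).coeff 0 = 0 := by
  rw [Polynomial.coeff_iterate_derivative]
  have h1 : ((1+X:ℝ[X])^d * X^(n+1-d)).coeff (0+r) = 0 := by
    rw [Polynomial.coeff_mul_X_pow']
    rw [if_neg (by omega)]
  rw [h1, smul_zero]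

end Stmt12Aux

/-- Lemma 5(i): with `Ψ_n(x) = (1+x)^d x^{n+1−d}`, `2 ≤ d ≤ n`, `k ≥ 1` and `ℓ = k−1`,
`ν_n = −∑_{m=0}^{n−d}∑_{j=0}^{n−d−m}∑_{i=0}^{m} (−1)^{n−d−i−j} (ℓ^{i−1}/(i!j!)) Ψ_n^{(i+j)}(ℓ)
C(n−m−j−1, d−1)` equals `−(k^d + ⋯ + k^n)`.  The factor `ℓ^{i−1} Ψ_n^{(i+j)}(ℓ)` is
interpreted via the polynomial expansion, i.e. as `ℓ^i · (Ψ_n^{(i+j)}/x)(ℓ)` using that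
`Ψ_n^{(i+j)}` has zero constant term (`Polynomial.divX`). -/
theorem stmt12 (n d k : ℕ) (hd : 2 ≤ d) (hdn : d ≤ n) (hk : 1 ≤ k) :
    -(∑ m ∈ Finset.range (n - d + 1), ∑ j ∈ Finset.range (n - d - m + 1),
        ∑ i ∈ Finset.range (m + 1),
          (-1 : ℝ) ^ (n - d - i - j) *
            (((k : ℝ) - 1) ^ i *
              ((Polynomial.derivative^[i + j]
                  ((1 + X : ℝ[X]) ^ d * X ^ (n + 1 - d))).divX.eval ((k : ℝ) - 1))) /
            (Nat.factorial i * Nat.factorial j) *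
            ((n - m - j - 1).choose (d - 1) : ℝ)) =
      -(∑ t ∈ Finset.Icc d n, (k : ℝ) ^ t) := by
  have hd1 : 1 ≤ d := by omega
  rw [neg_inj]
  set ℓ : ℝ := (k:ℝ) - 1 with hℓ
  set D : ℕ → ℝ := fun r =>
    (Polynomial.derivative^[r] ((1 + X : ℝ[X]) ^ d * X ^ (n + 1 - d))).divX.eval ℓ with hD
  -- Step 0: final polynomial fact, evaluated
  have hQeval : ∑ r ∈ Finset.range (n-d+1),
      ((-1:ℝ)^(n-d-r) * ((n-r).choose d) / r.factorial) * ((1+ℓ)^r * D r)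
      = ∑ t ∈ Finset.Icc d n, (1+ℓ)^t := by
    have hQ : (∑ r ∈ Finset.range (n-d+1),
        ((-1:ℝ)^(n-d-r) * ((n-r).choose d) / r.factorial) •
          ((1+X:ℝ[X])^r * (derivative^[r] ((1+X)^d * X^(n+1-d))).divX))
        = ∑ t ∈ Finset.Icc d n, (1+X:ℝ[X])^t := by
      apply mul_left_cancel₀ (Polynomial.X_ne_zero : (X:ℝ[X]) ≠ 0)
      rw [Finset.mul_sum, lem_geom n d hdn]
      have hterm : ∀ r ∈ Finset.range (n-d+1),
          (X:ℝ[X]) * (((-1:ℝ)^(n-d-r) * ((n-r).choose d) / r.factorial) •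
            ((1+X:ℝ[X])^r * (derivative^[r] ((1+X)^d * X^(n+1-d))).divX))
          = ((-1:ℝ)^(n-d-r) * ((n-r).choose d) / r.factorial) •
            ((1+X:ℝ[X])^r * (derivative^[r] ((1+X)^d * X^(n+1-d)))) := by
        intro r hr
        rw [Finset.mem_range] at hr
        have h0 := lem_coeff0 n d r hdn (by omega)
        have hXdiv : (X:ℝ[X]) * (derivative^[r] ((1+X:ℝ[X])^d * X^(n+1-d))).divX
            = derivative^[r] ((1+X:ℝ[X])^d * X^(n+1-d)) := by
          have h2 := Polynomial.X_mul_divX_add (derivative^[r] ((1+X:ℝ[X])^d * X^(n+1-d)))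
          rw [h0, map_zero, add_zero] at h2
          exact h2
        rw [mul_smul_comm,
          show (X:ℝ[X]) * ((1+X:ℝ[X])^r * (derivative^[r] ((1+X:ℝ[X])^d * X^(n+1-d))).divX)
            = (1+X:ℝ[X])^r * ((X:ℝ[X]) * (derivative^[r] ((1+X:ℝ[X])^d * X^(n+1-d))).divX) by
              ring, hXdiv]
      rw [Finset.sum_congr rfl hterm]
      exact lem_key n d hd1 hdn
    have h3 := congrArg (Polynomial.eval ℓ) hQ
    simpa [Polynomial.eval_finset_sum, smul_eq_mul] using h3
  -- Step A1: swap m and j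
  rw [Finset.sum_comm' (t' := Finset.range (n-d+1)) (s' := fun j => Finset.range (n-d-j+1))
    (by intro m j; simp only [Finset.mem_range]; omega)]
  -- Step A2: swap m and i, hockey stick
  have stepA2 : ∀ j ∈ Finset.range (n-d+1),
      ∑ m ∈ Finset.range (n-d-j+1), ∑ i ∈ Finset.range (m+1),
        (-1 : ℝ) ^ (n - d - i - j) * (ℓ ^ i * D (i+j)) /
          (Nat.factorial i * Nat.factorial j) * ((n - m - j - 1).choose (d - 1) : ℝ)
      = ∑ i ∈ Finset.range (n-d-j+1),
        (-1 : ℝ) ^ (n - d - i - j) * (ℓ ^ i * D (i+j)) /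
          (Nat.factorial i * Nat.factorial j) * ((n-i-j).choose d : ℝ) := by
    intro j hj
    rw [Finset.mem_range] at hj
    rw [Finset.sum_comm' (t' := Finset.range (n-d-j+1)) (s' := fun i => Finset.Icc i (n-d-j))
      (by intro m i; simp only [Finset.mem_range, Finset.mem_Icc]; omega)]
    apply Finset.sum_congr rfl
    intro i hi
    rw [Finset.mem_range] at hi
    rw [← Finset.mul_sum, ← Nat.cast_sum, lem_hockey n d i j hd hdn (by omega)]
  rw [Finset.sum_congr rfl stepA2]
  -- Step B: reindex diagonals
  rw [tri_swap2 (n-d) (fun j i => (-1 : ℝ) ^ (n - d - i - j) * (ℓ ^ i * D (i+j)) /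
          (Nat.factorial i * Nat.factorial j) * ((n-i-j).choose d : ℝ))]
  -- Step B2: collapse inner binomial sum
  have stepB2 : ∀ r ∈ Finset.range (n-d+1),
      ∑ j ∈ Finset.range (r+1),
        (-1 : ℝ) ^ (n - d - (r-j) - j) * (ℓ ^ (r-j) * D ((r-j)+j)) /
          (Nat.factorial (r-j) * Nat.factorial j) * ((n-(r-j)-j).choose d : ℝ)
      = ((-1:ℝ)^(n-d-r) * ((n-r).choose d) / r.factorial) * ((1+ℓ)^r * D r) := by
    intro r hr
    rw [Finset.mem_range] at hr
    have hpt : ∀ j ∈ Finset.range (r+1),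
        (-1 : ℝ) ^ (n - d - (r-j) - j) * (ℓ ^ (r-j) * D ((r-j)+j)) /
          (Nat.factorial (r-j) * Nat.factorial j) * ((n-(r-j)-j).choose d : ℝ)
        = ((-1:ℝ)^(n-d-r) * ((n-r).choose d) * D r) *
            (ℓ^(r-j) / ((r-j).factorial * j.factorial)) := by
      intro j hj
      rw [Finset.mem_range] at hj
      have e1 : n - d - (r-j) - j = n - d - r := by omega
      have e2 : (r-j) + j = r := by omega
      have e3 : n - (r-j) - j = n - r := by omega
      rw [e1, e2, e3]
      ring
    rw [Finset.sum_congr rfl hpt, ← Finset.mul_sum, lem_binom ℓ r]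
    have e4 : ℓ + 1 = 1 + ℓ := by ring
    rw [e4]
    ring
  rw [Finset.sum_congr rfl stepB2, hQeval]
  apply Finset.sum_congr rfl
  intro t _
  have : (1:ℝ) + ℓ = (k:ℝ) := by rw [hℓ]; ring
  rw [this]
end

section
/- Let n ≥ d ≥ 2 and k ≥ 1, ℓ = k−1. With ψ_a(x) = (1+x)^{d−a_1} x^{n−d−a_2−1} and σ_{a_1}^{(d)} = C(d,a_1), τ_{a_2}^{(d)} = C(n+1−d, a_2), W_δ^{(d)} = C(δ+d−1, d−1) (all symmetric functions evaluated at k_1=⋯=k_d=1), one has Σ_{|a|=0}^{n−d} Σ_{m=0}^{n−d−|a|} (−1)^{n−d−|a|−m} (ψ_a^{(m)}(ℓ)/m!) (k−1)^m C(d,a_1) C(n+1−d,a_2) C(n−d−|a|−m+d−1, d−1) = (n+1−d)(1 + k + ⋯ + k^{d−1}). -/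
open Polynomial
open Finset


theorem L2 (p : ℝ[X]) (r : ℝ) (m : ℕ) :
    ((derivative^[m] p).eval r) / (m.factorial : ℝ) = (taylor r p).coeff m := by
  rw [taylor_coeff, ← factorial_smul_hasseDeriv]
  simp only [Pi.smul_apply, eval_smul, nsmul_eq_mul]
  field_simp
  rw [Module.End.mul_apply, Module.End.natCast_apply, nsmul_eq_mul, eval_mul, eval_natCast]

theorem L1 (p : ℝ[X]) (s : ℝ) (n : ℕ) : (p.comp (C s * X)).coeff n = p.coeff n * s ^ n := by
  induction p using Polynomial.induction_on' with
  | add p q hp hq => simp [add_comp, hp, hq, add_mul]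
  | monomial i a =>
      rw [monomial_comp, mul_pow, ← C_pow, ← mul_assoc, ← C_mul, coeff_C_mul, coeff_monomial,
        coeff_X_pow]
      by_cases h : i = n
      · simp [h, mul_comm]
      · simp [h, Ne.symm h]

theorem Ldivx (p : ℝ[X]) (e : ℕ) : (p * X ^ (e+1)).divX = p * X ^ e := by
  ext n
  rw [coeff_divX, coeff_mul_X_pow', coeff_mul_X_pow']
  by_cases h : e ≤ n
  · simp only [h, Nat.succ_le_succ_iff, if_true]
    congr 1
    omega
  · simp [h, Nat.succ_le_succ_iff]


noncomputable def Rp (c M : ℕ) : ℝ[X] :=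
  ∑ j ∈ Finset.range (M+1), C ((-1:ℝ)^j * ((j+c).choose c : ℝ)) * X^j

theorem Rp_coeff (c M i : ℕ) :
    (Rp c M).coeff i = if i ≤ M then (-1:ℝ)^i * ((i+c).choose c : ℝ) else 0 := by
  rw [Rp, finset_sum_coeff]
  simp only [coeff_C_mul, coeff_X_pow, mul_ite, mul_one, mul_zero]
  rw [Finset.sum_ite_eq (Finset.range (M+1)) i]
  simp [Nat.lt_succ_iff]

theorem Rp_rec (c M : ℕ) :
    (1 + X) * Rp (c+1) M = Rp c M + C ((-1:ℝ)^M * ((M+(c+1)).choose (c+1) : ℝ)) * X^(M+1) := by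
  ext i
  rw [add_mul, one_mul, coeff_add, coeff_add, coeff_C_mul, coeff_X_pow]
  rcases i with _ | i
  · simp [Rp_coeff]
  · rw [coeff_X_mul, Rp_coeff, Rp_coeff, Rp_coeff]
    by_cases h1 : i + 1 ≤ M
    · have h2 : i ≤ M := by omega
      have hne : ¬ (M + 1 = i + 1) := by omega
      have hne2 : ¬ (i = M) := by omega
      simp only [h1, h2, if_true, hne, hne2, if_false, mul_zero, add_zero]
      rw [if_neg (by omega : ¬ (i + 1 = M + 1))]
      simp only [mul_zero, add_zero]
      have : (i + 1 + (c+1)).choose (c+1) = (i+1+c).choose c + (i+1+c).choose (c+1) := by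
        rw [show i + 1 + (c+1) = (i+1+c) + 1 by ring, Nat.choose_succ_succ]
      rw [this, show i + (c+1) = i + 1 + c by ring]
      push_cast
      ring
    · by_cases h2 : i + 1 = M + 1
      · obtain rfl : M = i := by omega
        have h5 : (M + 1 + (c+1)).choose (c+1) = (M+1+c).choose c + (M+1+c).choose (c+1) := by
          rw [show M + 1 + (c+1) = (M+1+c) + 1 by ring, Nat.choose_succ_succ]
        simp only [h1, if_false, le_refl, if_true, if_pos rfl, mul_one, zero_add,
          show M + (c+1) = M + 1 + c by ring, h5]
        try push_cast
        try ring
      · have h3 : ¬ i ≤ M := by omega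
        have h4 : ¬ (i = M) := by omega
        simp [h1, h3, h4]

theorem Rp_key (c M : ℕ) : ∃ E : ℝ[X], (1 + X)^(c+1) * Rp c M = 1 + X^(M+1) * E := by
  induction c with
  | zero =>
      refine ⟨(-1 : ℝ[X])^M, ?_⟩
      have h0 : Rp 0 M = ∑ j ∈ Finset.range (M+1), (-X:ℝ[X])^j := by
        unfold Rp
        refine Finset.sum_congr rfl fun j _ => ?_
        rw [Nat.choose_zero_right, Nat.cast_one, mul_one, map_pow, map_neg, map_one, neg_pow (X : ℝ[X])]
      rw [pow_one, h0]
      linear_combination -(geom_sum_mul (-X:ℝ[X]) (M+1))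
  | succ c ih =>
      obtain ⟨E, hE⟩ := ih
      refine ⟨E + C ((-1:ℝ)^M * ((M+(c+1)).choose (c+1) : ℝ)) * (1+X)^(c+1), ?_⟩
      have : (1 + X)^(c+1+1) * Rp (c+1) M = (1+X)^(c+1) * ((1+X) * Rp (c+1) M) := by ring
      rw [this, Rp_rec, mul_add, hE]
      ring


theorem L4 (c N' : ℕ) (h : 1 ≤ N') :
    ((1+X:ℝ[X])^(N'-1) * ((1+X)^(c+1) * Rp c N')).coeff N' = 0 := by
  obtain ⟨E, hE⟩ := Rp_key c N'
  rw [hE, mul_add, mul_one, coeff_add, coeff_one_add_X_pow,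
    show (1+X:ℝ[X])^(N'-1) * (X^(N'+1) * E) = ((1+X)^(N'-1) * E) * X^(N'+1) by ring,
    coeff_mul_X_pow']
  rw [Nat.choose_eq_zero_of_lt (by omega), if_neg (by omega)]
  simp

theorem core (d : ℕ) (hd : 1 ≤ d) (ℓ : ℝ) (N' : ℕ) (hN : 1 ≤ N') :
    ∑ a1 ∈ Finset.range (N'+1), ∑ m ∈ Finset.range (N'-a1+1),
      (-1:ℝ)^(N'-a1-m) *
        ((derivative^[m] ((1+X:ℝ[X])^(d-a1) * X^(N'-1))).eval ℓ / (m.factorial : ℝ)) * ℓ^m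
        * (d.choose a1 : ℝ) * (((N'-a1-m) + (d-1)).choose (d-1) : ℝ) = 0 := by
  obtain ⟨c, rfl⟩ : ∃ c, d = c + 1 := ⟨d - 1, by omega⟩
  set R := Rp c N' with hR
  set Q : ℕ → ℝ[X] := fun a1 => ((1+X:ℝ[X])^(c+1-a1) * X^(N'-1)).comp (C ℓ * X + C ℓ) with hQ
  -- Q coefficients:
  have hQc : ∀ a1 m : ℕ, (Q a1).coeff m
      = ((derivative^[m] ((1+X:ℝ[X])^(c+1-a1) * X^(N'-1))).eval ℓ / (m.factorial : ℝ)) * ℓ^m := by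
    intro a1 m
    rw [L2]
    set P : ℝ[X] := (1+X:ℝ[X])^(c+1-a1) * X^(N'-1)
    have : Q a1 = (taylor ℓ P).comp (C ℓ * X) := by
      rw [taylor_apply, comp_assoc]
      congr 1
      simp [add_comp]
      rfl
    rw [this, L1]
  -- inner sum = coefficient of product
  have hinner : ∀ a1 ∈ Finset.range (N'+1),
      (∑ m ∈ Finset.range (N'-a1+1),
        (-1:ℝ)^(N'-a1-m) *
          ((derivative^[m] ((1+X:ℝ[X])^(c+1-a1) * X^(N'-1))).eval ℓ / (m.factorial:ℝ)) * ℓ^m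
          * ((c+1).choose a1 : ℝ) * (((N'-a1-m) + (c+1-1)).choose (c+1-1) : ℝ))
      = ((c+1).choose a1 : ℝ) * ((Q a1 * R) * X^a1).coeff N' := by
    intro a1 ha1
    rw [Finset.mem_range] at ha1
    have ha1' : a1 ≤ N' := by omega
    rw [coeff_mul_X_pow' (Q a1 * R) a1 N', if_pos ha1', coeff_mul,
      Finset.Nat.sum_antidiagonal_eq_sum_range_succ_mk, Finset.mul_sum]
    refine Finset.sum_congr rfl fun m hm => ?_
    rw [Finset.mem_range] at hm
    rw [hQc, hR, Rp_coeff, if_pos (by omega : N' - a1 - m ≤ N')]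
    have : c + 1 - 1 = c := by omega
    rw [this]
    ring
  rw [Finset.sum_congr rfl hinner]
  -- convert each term into coeff of (Ca1 * Q a1 * X^a1 * R)
  have step2 : ∀ a1 : ℕ, ((c+1).choose a1 : ℝ) * ((Q a1 * R) * X^a1).coeff N'
      = ((C (((c+1).choose a1 : ℝ)) * Q a1 * X^a1) * R).coeff N' := by
    intro a1
    rw [show (C (((c+1).choose a1 : ℝ)) * Q a1 * X^a1) * R
        = C (((c+1).choose a1 : ℝ)) * ((Q a1 * R) * X^a1) by ring, coeff_C_mul]
  rw [Finset.sum_congr rfl fun a1 _ => step2 a1]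
  -- extend range to d + N' + 1
  have hz : ∀ a1 ∈ Finset.range (c+1+N'+1), a1 ∉ Finset.range (N'+1) →
      ((C (((c+1).choose a1 : ℝ)) * Q a1 * X^a1) * R).coeff N' = 0 := by
    intro a1 _ h2
    rw [Finset.mem_range] at h2
    rw [show (C (((c+1).choose a1 : ℝ)) * Q a1 * X^a1) * R
        = (C (((c+1).choose a1 : ℝ)) * Q a1 * R) * X^a1 by ring,
      coeff_mul_X_pow', if_neg (by omega)]
  rw [Finset.sum_subset (Finset.range_subset_range.2 (by omega : N'+1 ≤ c+1+N'+1)) hz]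
  -- pull coeff and R out of the sum
  have : ∑ a1 ∈ Finset.range (c+1+N'+1),
      ((C (((c+1).choose a1 : ℝ)) * Q a1 * X^a1) * R).coeff N'
      = (((∑ a1 ∈ Finset.range (c+1+N'+1), C (((c+1).choose a1 : ℝ)) * Q a1 * X^a1)) * R).coeff N' := by
    rw [Finset.sum_mul, finset_sum_coeff]
  rw [this]
  -- compute the big sum
  have hbig : (∑ a1 ∈ Finset.range (c+1+N'+1), C (((c+1).choose a1 : ℝ)) * Q a1 * X^a1)
      = C ((ℓ+1)^(c+1) * ℓ^(N'-1)) * ((1+X)^(N'-1) * (1+X)^(c+1)) := by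
    have hsub : ∀ a1 ∈ Finset.range (c+1+N'+1), a1 ∉ Finset.range (c+1+1) →
        C (((c+1).choose a1 : ℝ)) * Q a1 * X^a1 = 0 := by
      intro a1 _ h2
      rw [Finset.mem_range] at h2
      rw [Nat.choose_eq_zero_of_lt (by omega), Nat.cast_zero, map_zero, zero_mul, zero_mul]
    rw [← Finset.sum_subset (Finset.range_subset_range.2 (by omega : c+1+1 ≤ c+1+N'+1)) hsub]
    have hQval : ∀ a1, Q a1 = (C (ℓ+1) + C ℓ * X)^(c+1-a1) * (C ℓ * X + C ℓ)^(N'-1) := by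
      intro a1
      rw [hQ]
      simp only [mul_comp, pow_comp, add_comp, one_comp, X_comp, mul_comp, C_comp]
      congr 2
      rw [C_add, C_1]
      ring
    have : ∀ a1 ∈ Finset.range (c+1+1),
        C (((c+1).choose a1 : ℝ)) * Q a1 * X^a1
          = X^a1 * (C (ℓ+1) + C ℓ * X)^(c+1-a1) * (((c+1).choose a1 : ℝ[X])) * (C ℓ * X + C ℓ)^(N'-1) := by
      intro a1 _
      rw [hQval, map_natCast (C : ℝ →+* ℝ[X])]
      ring
    rw [Finset.sum_congr rfl this, ← Finset.sum_mul, ← add_pow (X : ℝ[X]) (C (ℓ+1) + C ℓ * X) (c+1)]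
    rw [show (X + (C (ℓ+1) + C ℓ * X) : ℝ[X]) = C (ℓ+1) * (1+X) by rw [C_add, C_1]; ring,
      show (C ℓ * X + C ℓ : ℝ[X]) = C ℓ * (1+X) by ring,
      mul_pow, mul_pow, ← C_pow, ← C_pow, map_mul]
    ring
  rw [hbig,
    show C ((ℓ+1)^(c+1) * ℓ^(N'-1)) * ((1+X:ℝ[X])^(N'-1) * (1+X)^(c+1)) * R
      = C ((ℓ+1)^(c+1) * ℓ^(N'-1)) * ((1+X:ℝ[X])^(N'-1) * ((1+X)^(c+1) * R)) by ring,
    coeff_C_mul, hR, L4 c N' hN, mul_zero]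


theorem eval_divX_geom (d : ℕ) (hd : 1 ≤ d) (k : ℕ) :
    (divX ((1+X:ℝ[X])^d)).eval ((k:ℝ)-1) = ∑ t ∈ Finset.range d, (k:ℝ)^t := by
  have hc0 : ((1+X:ℝ[X])^d).coeff 0 = 1 := by
    rw [coeff_one_add_X_pow, Nat.choose_zero_right, Nat.cast_one]
  by_cases hk : (k:ℝ) - 1 = 0
  · have hk1 : (k:ℝ) = 1 := by linarith
    rw [hk]
    rw [← coeff_zero_eq_eval_zero, coeff_divX, coeff_one_add_X_pow]
    simp [hk1, hd]
  · have h := divX_mul_X_add ((1+X:ℝ[X])^d)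
    have h2 := congrArg (eval ((k:ℝ)-1)) h
    simp only [eval_add, eval_mul, eval_X, eval_C, eval_pow, eval_one, hc0] at h2
    have h3 : (∑ t ∈ Finset.range d, (k:ℝ)^t) * ((k:ℝ)-1) = (k:ℝ)^d - 1 :=
      geom_sum_mul _ _
    apply mul_right_cancel₀ hk
    rw [h3]
    have : (1 + ((k:ℝ)-1))^d = (k:ℝ)^d := by ring_nf
    linarith [h2, this]


theorem swap_sum (N : ℕ) (f : ℕ → ℕ → ℝ) :
    ∑ a1 ∈ Finset.range (N+1), ∑ a2 ∈ Finset.range (N-a1+1), f a1 a2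
      = ∑ a2 ∈ Finset.range (N+1), ∑ a1 ∈ Finset.range (N-a2+1), f a1 a2 := by
  have key : ∀ g : ℕ → ℕ → ℝ, ∀ x, x ∈ Finset.range (N+1) →
      ∑ y ∈ Finset.range (N-x+1), g x y
        = ∑ y ∈ Finset.range (N+1), if x + y ≤ N then g x y else 0 := by
    intro g x hx
    rw [Finset.mem_range] at hx
    have h1 : ∀ y ∈ Finset.range (N+1), y ∉ Finset.range (N-x+1) →
        (if x + y ≤ N then g x y else 0) = 0 := by
      intro y hy hy2
      rw [Finset.mem_range] at hy
      rw [Finset.mem_range, not_lt] at hy2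
      exact if_neg (by omega)
    have h0 : ∑ y ∈ Finset.range (N-x+1), g x y
        = ∑ y ∈ Finset.range (N-x+1), if x + y ≤ N then g x y else 0 := by
      refine Finset.sum_congr rfl fun y hy => ?_
      rw [Finset.mem_range] at hy
      rw [if_pos (by omega)]
    rw [h0, Finset.sum_subset (Finset.range_subset_range.2 (by omega : N-x+1 ≤ N+1)) h1]
  rw [Finset.sum_congr rfl (key f), Finset.sum_comm,
    Finset.sum_congr rfl (key (fun a2 a1 => f a1 a2))]
  refine Finset.sum_congr rfl fun y _ => Finset.sum_congr rfl fun x _ => ?_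
  exact if_congr (by omega) rfl rfl


/-- Lemma 5(ii): with all symmetric functions evaluated at `k₁=⋯=k_d=1`
(`σ_{a₁} = C(d,a₁)`, `τ_{a₂} = C(n+1−d,a₂)`, `W_δ = C(δ+d−1,d−1)`), `ℓ = k−1`, and
`ψ_a(x) = (1+x)^{d−a₁} x^{n−d−a₂−1}` (interpreted via the polynomial expansion, i.e.
`divX ((1+x)^{d−a₁} x^{n−d−a₂})`), one has
`∑_{|a|=0}^{n−d} ∑_{m=0}^{n−d−|a|} (−1)^{n−d−|a|−m} (ψ_a^{(m)}(ℓ)/m!) (k−1)^m C(d,a₁)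
C(n+1−d,a₂) C(n−d−|a|−m+d−1, d−1) = (n+1−d)(1+k+⋯+k^{d−1})`. -/
theorem stmt13 (n d k : ℕ) (hd : 2 ≤ d) (hdn : d ≤ n) (hk : 1 ≤ k) :
    ∑ a1 ∈ Finset.range (n - d + 1), ∑ a2 ∈ Finset.range (n - d - a1 + 1),
        ∑ m ∈ Finset.range (n - d - a1 - a2 + 1),
          (-1 : ℝ) ^ (n - d - (a1 + a2) - m) *
            ((Polynomial.derivative^[m]
                (((1 + X : ℝ[X]) ^ (d - a1) * X ^ (n - d - a2)).divX)).eval ((k : ℝ) - 1) /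
              (Nat.factorial m)) *
            ((k : ℝ) - 1) ^ m * (d.choose a1 : ℝ) * ((n + 1 - d).choose a2 : ℝ) *
            ((n - d - (a1 + a2) - m + d - 1).choose (d - 1) : ℝ) =
      ((n + 1 - d : ℕ) : ℝ) * ∑ t ∈ Finset.range d, (k : ℝ) ^ t := by
  set N := n - d with hN
  rw [show n + 1 - d = N + 1 by omega]
  set ℓ : ℝ := (k : ℝ) - 1 with hℓ
  -- swap the order of summation
  rw [swap_sum]
  rw [Finset.sum_range_succ]
  -- the a2 < N part vanishes
  have hvanish : ∀ a2 ∈ Finset.range N,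
      (∑ a1 ∈ Finset.range (N - a2 + 1), ∑ m ∈ Finset.range (N - a1 - a2 + 1),
          (-1 : ℝ) ^ (N - (a1 + a2) - m) *
            ((Polynomial.derivative^[m]
                (((1 + X : ℝ[X]) ^ (d - a1) * X ^ (N - a2)).divX)).eval ℓ /
              (Nat.factorial m)) *
            ℓ ^ m * (d.choose a1 : ℝ) * ((N + 1).choose a2 : ℝ) *
            ((N - (a1 + a2) - m + d - 1).choose (d - 1) : ℝ)) = 0 := by
    intro a2 ha2
    rw [Finset.mem_range] at ha2
    obtain ⟨e, he⟩ : ∃ e, N - a2 = e + 1 := ⟨N - a2 - 1, by omega⟩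
    have hstep : (∑ a1 ∈ Finset.range (N - a2 + 1), ∑ m ∈ Finset.range (N - a1 - a2 + 1),
          (-1 : ℝ) ^ (N - (a1 + a2) - m) *
            ((Polynomial.derivative^[m]
                (((1 + X : ℝ[X]) ^ (d - a1) * X ^ (N - a2)).divX)).eval ℓ /
              (Nat.factorial m)) *
            ℓ ^ m * (d.choose a1 : ℝ) * ((N + 1).choose a2 : ℝ) *
            ((N - (a1 + a2) - m + d - 1).choose (d - 1) : ℝ))
        = ((N + 1).choose a2 : ℝ) *
          ∑ a1 ∈ Finset.range ((e+1)+1), ∑ m ∈ Finset.range ((e+1)-a1+1),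
            (-1:ℝ)^((e+1)-a1-m) *
              ((Polynomial.derivative^[m] ((1+X:ℝ[X])^(d-a1) * X^((e+1)-1))).eval ℓ /
                (Nat.factorial m)) * ℓ^m
              * (d.choose a1 : ℝ) * ((((e+1)-a1-m) + (d-1)).choose (d-1) : ℝ) := by
      rw [Finset.mul_sum]
      refine Finset.sum_congr (by rw [he]) fun a1 ha1 => ?_
      rw [Finset.mem_range] at ha1
      rw [Finset.mul_sum]
      refine Finset.sum_congr (by congr 1; omega) fun m hm => ?_
      rw [Finset.mem_range] at hm
      rw [show N - a2 = e + 1 from he, Ldivx,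
        show N - (a1 + a2) - m = (e+1) - a1 - m by omega,
        show (e+1) - a1 - m + d - 1 = ((e+1) - a1 - m) + (d - 1) by omega,
        show (e+1) - 1 = e by omega]
      ring
    rw [hstep, core d (by omega) ℓ (e+1) (by omega), mul_zero]
  rw [Finset.sum_eq_zero hvanish, zero_add]
  rw [show N - N + 1 = 1 by omega, Finset.sum_range_one,
    show N - 0 - N + 1 = 1 by omega, Finset.sum_range_one]
  rw [show N - (0 + N) - 0 = 0 by omega, show (0:ℕ) + d - 1 = d - 1 by omega,
    show N - N = 0 by omega, show d - 0 = d by omega, pow_zero, pow_zero, pow_zero, mul_one,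
    Nat.choose_succ_self_right, Nat.choose_zero_right, Nat.choose_self]
  rw [Function.iterate_zero_apply, mul_one, hℓ, eval_divX_geom d (by omega) k,
    Nat.factorial_zero]
  push_cast
  ring
end

section
/- Let X(z) = Σ_{j=1}^{n} P_j(z) ∂/∂z_j be a polynomial vector field on ℂ^n, let W = {z_1 = ⋯ = z_d = 0}, and let m_i denote the order of vanishing of P_i along W (the least total degree in z_1,…,z_d appearing in P_i). Then there exists an invertible linear change of coordinates w = Az, with A block-lower-triangular preserving W (a_{ij} = 0 for 1 ≤ i ≤ d, d+1 ≤ j ≤ n), such that in the new coordinates the components Q_j satisfy: the vanishing order of Q_j along W equals min{m_1,…,m_d} for 1 ≤ j ≤ d, and equals min{m_1,…,m_n} for d+1 ≤ j ≤ n, for a generic choice of A. -/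
open MvPolynomial

/-- The order of vanishing of a polynomial along `W = {z₁ = ⋯ = z_d = 0}`: the least
total degree in the first `d` variables appearing in a monomial of `P` (and `∞` for
the zero polynomial). -/
noncomputable def ordW (n d : ℕ) (P : MvPolynomial (Fin n) ℂ) : ℕ∞ :=
  P.support.inf fun s =>
    ((∑ j ∈ Finset.univ.filter (fun j : Fin n => (j : ℕ) < d), s j : ℕ) : ℕ∞)

namespace StmtAux

variable {n d : ℕ}

def wgt (n d : ℕ) (s : Fin n →₀ ℕ) : ℕ :=
  ∑ j ∈ Finset.univ.filter (fun j : Fin n => (j : ℕ) < d), s j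

lemma ordW_def (P : MvPolynomial (Fin n) ℂ) :
    ordW n d P = P.support.inf (fun s => ((wgt n d s : ℕ) : ℕ∞)) := rfl

lemma le_ordW {k : ℕ∞} {P : MvPolynomial (Fin n) ℂ} :
    k ≤ ordW n d P ↔ ∀ s, coeff s P ≠ 0 → k ≤ (wgt n d s : ℕ∞) := by
  rw [ordW_def, Finset.le_inf_iff]
  simp [mem_support_iff]

lemma ordW_le_wgt {P : MvPolynomial (Fin n) ℂ} {s : Fin n →₀ ℕ} (h : coeff s P ≠ 0) :
    ordW n d P ≤ (wgt n d s : ℕ∞) :=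
  Finset.inf_le (mem_support_iff.mpr h)

lemma wgt_add (s t : Fin n →₀ ℕ) : wgt n d (s + t) = wgt n d s + wgt n d t := by
  simp [wgt, Finset.sum_add_distrib]

lemma ordW_mul (P Q : MvPolynomial (Fin n) ℂ) :
    ordW n d P + ordW n d Q ≤ ordW n d (P * Q) := by
  rw [le_ordW]
  intro s hs
  rw [coeff_mul] at hs
  obtain ⟨x, hx, hne⟩ := Finset.exists_ne_zero_of_sum_ne_zero hs
  rw [Finset.HasAntidiagonal.mem_antidiagonal] at hx
  have h1 : coeff x.1 P ≠ 0 := fun h => hne (by simp [h])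
  have h2 : coeff x.2 Q ≠ 0 := fun h => hne (by simp [h])
  calc ordW n d P + ordW n d Q ≤ (wgt n d x.1 : ℕ∞) + (wgt n d x.2 : ℕ∞) :=
        add_le_add (ordW_le_wgt h1) (ordW_le_wgt h2)
    _ = (wgt n d s : ℕ∞) := by rw [← hx, wgt_add]; push_cast; ring

lemma ordW_sum {α : Type*} (S : Finset α) (f : α → MvPolynomial (Fin n) ℂ) (g : α → ℕ∞)
    (h : ∀ a ∈ S, g a ≤ ordW n d (f a)) : S.inf g ≤ ordW n d (∑ a ∈ S, f a) := by
  rw [le_ordW]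
  intro s hs
  rw [MvPolynomial.coeff_sum] at hs
  obtain ⟨a, ha, hne⟩ := Finset.exists_ne_zero_of_sum_ne_zero hs
  exact le_trans (Finset.inf_le ha) (le_trans (h a ha) (ordW_le_wgt hne))


lemma ordW_prod {α : Type*} (S : Finset α) (f : α → MvPolynomial (Fin n) ℂ) (g : α → ℕ∞)
    (h : ∀ a ∈ S, g a ≤ ordW n d (f a)) :
    (∑ a ∈ S, g a) ≤ ordW n d (∏ a ∈ S, f a) := by
  classical
  induction S using Finset.induction with
  | empty =>
      simp only [Finset.sum_empty, Finset.prod_empty]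
      exact zero_le
  | insert a S hni ih =>
      rw [Finset.sum_insert hni, Finset.prod_insert hni]
      refine le_trans (add_le_add (h a (Finset.mem_insert_self a S))
        (ih fun b hb => h b (Finset.mem_insert_of_mem hb))) (ordW_mul _ _)

lemma ordW_pow (P : MvPolynomial (Fin n) ℂ) (k : ℕ) :
    (k : ℕ∞) * ordW n d P ≤ ordW n d (P ^ k) := by
  induction k with
  | zero => simp
  | succ k ih =>
      have : ((k : ℕ∞) + 1) * ordW n d P = (k : ℕ∞) * ordW n d P + ordW n d P := by ring
      rw [pow_succ]
      push_cast
      rw [this]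
      exact le_trans (add_le_add ih le_rfl) (ordW_mul _ _)

lemma wgt_single {u : Fin n} (hu : (u : ℕ) < d) : wgt n d (Finsupp.single u 1) = 1 := by
  rw [wgt]
  rw [Finset.sum_eq_single u]
  · simp
  · intro b _ hb; exact Finsupp.single_eq_of_ne (fun h => hb h)
  · intro hmem; exact absurd (Finset.mem_filter.mpr ⟨Finset.mem_univ u, hu⟩) hmem

lemma ordW_linear (B : Matrix (Fin n) (Fin n) ℂ)
    (hB : ∀ t s : Fin n, (t : ℕ) < d → d ≤ (s : ℕ) → B t s = 0)
    (j : Fin n) (hj : (j : ℕ) < d) :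
    1 ≤ ordW n d (∑ s : Fin n, C (B j s) * X s) := by
  rw [le_ordW]
  intro u hu
  rw [MvPolynomial.coeff_sum] at hu
  obtain ⟨v, _, hne⟩ := Finset.exists_ne_zero_of_sum_ne_zero hu
  rw [coeff_C_mul, coeff_X'] at hne
  have hv : (v : ℕ) < d := by
    by_contra hge
    rw [hB j v hj (le_of_not_gt hge)] at hne
    simp at hne
  have huv : Finsupp.single v 1 = u := by
    by_contra hne'
    rw [if_neg hne'] at hne
    simp at hne
  rw [← huv, wgt_single hv]
  norm_num

lemma ordW_aeval (B : Matrix (Fin n) (Fin n) ℂ)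
    (hB : ∀ t s : Fin n, (t : ℕ) < d → d ≤ (s : ℕ) → B t s = 0)
    (R : MvPolynomial (Fin n) ℂ) :
    ordW n d R ≤
      ordW n d (aeval (fun t : Fin n => ∑ s : Fin n, C (B t s) * X s) R) := by
  classical
  set σ : Fin n → MvPolynomial (Fin n) ℂ := fun t => ∑ s : Fin n, C (B t s) * X s with hσ
  have hrw : aeval σ R =
      ∑ s ∈ R.support, C (coeff s R) * ∏ j ∈ s.support, (σ j) ^ (s j) := by
    conv_lhs => rw [R.as_sum]
    rw [map_sum]
    refine Finset.sum_congr rfl fun s _ => ?_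
    rw [aeval_monomial]
    rfl
  rw [hrw, ordW_def]
  refine ordW_sum _ _ _ fun s _ => ?_
  have h1 : (wgt n d s : ℕ∞) ≤ ordW n d (∏ j ∈ s.support, (σ j) ^ (s j)) := by
    have h2 := ordW_prod (d := d) s.support (fun j => (σ j) ^ (s j))
      (fun j => if (j : ℕ) < d then ((s j : ℕ) : ℕ∞) else 0) ?_
    · refine le_trans (le_of_eq ?_) h2
      have h3 : ∑ j ∈ s.support, (if (j : ℕ) < d then ((s j : ℕ) : ℕ∞) else 0) =
          ∑ j : Fin n, (if (j : ℕ) < d then ((s j : ℕ) : ℕ∞) else 0) := by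
        refine Finset.sum_subset (Finset.subset_univ _) fun j _ hj => ?_
        rw [Finsupp.notMem_support_iff] at hj
        simp [hj]
      rw [h3, ← Finset.sum_filter, wgt]
      push_cast
      rfl
    · intro j _
      by_cases hj : (j : ℕ) < d
      · rw [if_pos hj]
        calc ((s j : ℕ) : ℕ∞) = (s j : ℕ∞) * 1 := by rw [mul_one]
          _ ≤ (s j : ℕ∞) * ordW n d (σ j) :=
            mul_le_mul_right (ordW_linear B hB j hj) _
          _ ≤ ordW n d ((σ j) ^ (s j)) := ordW_pow _ _
      · rw [if_neg hj]; exact zero_le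
  calc (wgt n d s : ℕ∞) ≤ ordW n d (∏ j ∈ s.support, (σ j) ^ (s j)) := h1
    _ ≤ ordW n d (C (coeff s R)) + ordW n d (∏ j ∈ s.support, (σ j) ^ (s j)) := le_add_self
    _ ≤ ordW n d (C (coeff s R) * ∏ j ∈ s.support, (σ j) ^ (s j)) := ordW_mul _ _


lemma ordW_eq_top_iff {P : MvPolynomial (Fin n) ℂ} : ordW n d P = ⊤ ↔ P = 0 := by
  constructor
  · intro h
    by_contra hP
    obtain ⟨s, hs⟩ := MvPolynomial.ne_zero_iff.mp hP
    have := ordW_le_wgt (d := d) hs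
    rw [h] at this
    exact (ENat.coe_lt_top (wgt n d s)).not_ge this
  · rintro rfl
    simp [ordW]

lemma key (P Q : MvPolynomial (Fin n) ℂ) (h : ordW n d Q ≤ ordW n d P) :
    ∃ t : ℂ, t ≠ 0 ∧ ordW n d (P + C t * Q) = ordW n d Q := by
  classical
  by_cases hQ : Q = 0
  · subst hQ
    have hP : P = 0 := ordW_eq_top_iff.mp (top_le_iff.mp (by
      rw [ordW_eq_top_iff.mpr rfl] at h; exact h))
    exact ⟨1, one_ne_zero, by simp [hP]⟩
  -- Q ≠ 0 : the infimum is attained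
  obtain ⟨s₀, hs₀mem, hs₀⟩ := Finset.exists_mem_eq_inf Q.support
    (MvPolynomial.support_nonempty.mpr hQ)
    (fun s => ((wgt n d s : ℕ) : ℕ∞))
  rw [mem_support_iff] at hs₀mem
  have hQord : ordW n d Q = (wgt n d s₀ : ℕ∞) := hs₀
  -- lower bound for any t
  have hge : ∀ t : ℂ, ordW n d Q ≤ ordW n d (P + C t * Q) := by
    intro t
    rw [le_ordW]
    intro s hs
    rw [coeff_add, coeff_C_mul] at hs
    rcases ne_or_eq (coeff s P) 0 with hP' | hP'
    · exact le_trans h (ordW_le_wgt hP')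
    · have : coeff s Q ≠ 0 := by
        intro h0
        rw [hP', h0] at hs
        simp at hs
      exact ordW_le_wgt this
  -- if the order strictly increases, the leading coefficient cancels
  have hcancel : ∀ t : ℂ, ordW n d (P + C t * Q) ≠ ordW n d Q →
      coeff s₀ P + t * coeff s₀ Q = 0 := by
    intro t ht
    by_contra hne
    have : ordW n d (P + C t * Q) ≤ (wgt n d s₀ : ℕ∞) := by
      refine ordW_le_wgt ?_
      rw [coeff_add, coeff_C_mul]
      exact hne
    exact ht (le_antisymm (hQord ▸ this) (hge t))
  by_cases h1 : ordW n d (P + C 1 * Q) = ordW n d Q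
  · exact ⟨1, one_ne_zero, h1⟩
  by_cases h2 : ordW n d (P + C 2 * Q) = ordW n d Q
  · exact ⟨2, two_ne_zero, h2⟩
  exfalso
  have e1 := hcancel 1 h1
  have e2 := hcancel 2 h2
  apply hs₀mem
  have : (coeff s₀ P + 2 * coeff s₀ Q) - (coeff s₀ P + 1 * coeff s₀ Q) = coeff s₀ Q := by ring
  rw [← this, e1, e2, sub_zero]

/-- substitution associated to a matrix -/
noncomputable def σM (M : Matrix (Fin n) (Fin n) ℂ) : Fin n → MvPolynomial (Fin n) ℂ :=
  fun t => ∑ s : Fin n, C (M t s) * X s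

lemma aeval_σM_σM (M N : Matrix (Fin n) (Fin n) ℂ) (j : Fin n) :
    aeval (σM M) (σM N j) = σM (N * M) j := by
  classical
  rw [σM, σM, map_sum]
  simp only [map_mul, aeval_C, aeval_X, algebraMap_eq, σM, Matrix.mul_apply,
    Finset.mul_sum, map_sum, Finset.sum_mul]
  rw [Finset.sum_comm]
  refine Finset.sum_congr rfl fun v _ => Finset.sum_congr rfl fun u _ => ?_
  rw [mul_assoc]

lemma σM_one (j : Fin n) : σM (1 : Matrix (Fin n) (Fin n) ℂ) j = X j := by
  classical
  rw [σM, Finset.sum_eq_single j]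
  · simp [Matrix.one_apply]
  · intro b _ hb
    simp [Matrix.one_apply, Ne.symm hb]
  · intro hmem
    exact absurd (Finset.mem_univ j) hmem

lemma aeval_σM_comp (M N : Matrix (Fin n) (Fin n) ℂ) (R : MvPolynomial (Fin n) ℂ) :
    aeval (σM M) (aeval (σM N) R) = aeval (σM (N * M)) R := by
  rw [aeval_eq_bind₁, aeval_eq_bind₁, aeval_eq_bind₁, bind₁_bind₁]
  have : (fun i => (bind₁ (σM M)) (σM N i)) = σM (N * M) := by
    funext i
    rw [← aeval_eq_bind₁]
    exact aeval_σM_σM M N i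
  rw [this]

end StmtAux

open StmtAux in
/-- Lemma 1: for a polynomial vector field `X = ∑ P_j ∂/∂z_j` there is an invertible
linear change of coordinates `w = Az`, block-triangular preserving
`W = {z₁ = ⋯ = z_d = 0}`, whose new components `Q_i(w) = ∑_j a_{ij} P_j(A⁻¹ w)` vanish
along `W` to order `min{m₁,…,m_d}` for `1 ≤ i ≤ d` and `min{m₁,…,m_n}` for
`d+1 ≤ i ≤ n`, where `m_i = m_W(P_i)`. -/
theorem stmt14 (n d : ℕ) (hd : 1 ≤ d) (hdn : d ≤ n)
    (P : Fin n → MvPolynomial (Fin n) ℂ) :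
    ∃ A : Matrix (Fin n) (Fin n) ℂ, IsUnit A.det ∧
      (∀ i j : Fin n, (i : ℕ) < d → d ≤ (j : ℕ) → A i j = 0) ∧
      (∀ i : Fin n,
        ordW n d (∑ j : Fin n, MvPolynomial.C (A i j) *
            MvPolynomial.aeval
              (fun t : Fin n => ∑ s : Fin n, MvPolynomial.C (A⁻¹ t s) * MvPolynomial.X s)
              (P j)) =
          if (i : ℕ) < d then
            (Finset.univ.filter (fun j : Fin n => (j : ℕ) < d)).inf fun j => ordW n d (P j)
          else
            Finset.univ.inf fun j => ordW n d (P j)) := by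
  classical
  have hn : 0 < n := lt_of_lt_of_le hd hdn
  have hne : Nonempty (Fin n) := ⟨⟨0, hn⟩⟩
  set F : Finset (Fin n) := Finset.univ.filter (fun j : Fin n => (j : ℕ) < d) with hF
  set f : Fin n → ℕ∞ := fun j => ordW n d (P j) with hf
  set loc : ℕ∞ := F.inf f with hloc
  set glob : ℕ∞ := Finset.univ.inf f with hglob
  have hFne : F.Nonempty := ⟨⟨0, hn⟩, Finset.mem_filter.mpr ⟨Finset.mem_univ _, hd⟩⟩
  obtain ⟨j0, hj0F, hj0⟩ := Finset.exists_mem_eq_inf F hFne f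
  obtain ⟨jG, _, hjG⟩ := Finset.exists_mem_eq_inf Finset.univ Finset.univ_nonempty f
  have hj0d : (j0 : ℕ) < d := (Finset.mem_filter.mp hj0F).2
  set c : Fin n → Fin n := fun i => if (i : ℕ) < d then j0 else
    (if glob = loc then j0 else jG) with hc
  have hjGd : ¬ (glob = loc) → d ≤ (jG : ℕ) := by
    intro hgl
    by_contra hlt
    apply hgl
    refine le_antisymm (Finset.inf_mono (Finset.subset_univ F)) ?_
    rw [hglob, hjG]
    exact Finset.inf_le (Finset.mem_filter.mpr ⟨Finset.mem_univ jG, lt_of_not_ge hlt⟩)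
  have hcd : ∀ i : Fin n, (i : ℕ) < d → c i = j0 := fun i hi => by simp [hc, hi]
  have hcc : ∀ i, c (c i) = c i := by
    intro i
    rw [hc]
    by_cases hi : (i : ℕ) < d
    · simp [hi, hj0d]
    · simp only [if_neg hi]
      by_cases hgl : glob = loc
      · simp [hgl, hj0d]
      · simp [hgl, not_lt.mpr (hjGd hgl)]
  have htarget : ∀ i : Fin n, f (c i) = if (i : ℕ) < d then loc else glob := by
    intro i
    rw [hc]
    by_cases hi : (i : ℕ) < d
    · simp only [if_pos hi]
      exact hj0.symm
    · simp only [if_neg hi]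
      by_cases hgl : glob = loc
      · rw [if_pos hgl, ← hj0, ← hloc]
        exact hgl.symm
      · rw [if_neg hgl]
        exact hjG.symm
  have hc_ord : ∀ i : Fin n, ordW n d (P (c i)) ≤ ordW n d (P i) := by
    intro i
    have := htarget i
    by_cases hi : (i : ℕ) < d
    · rw [if_pos hi] at this
      show f (c i) ≤ f i
      rw [this, hloc]
      exact Finset.inf_le (Finset.mem_filter.mpr ⟨Finset.mem_univ i, hi⟩)
    · rw [if_neg hi] at this
      show f (c i) ≤ f i
      rw [this, hglob]
      exact Finset.inf_le (Finset.mem_univ i)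
  -- choose the scalars
  have hkey : ∀ i, ∃ t : ℂ, (c i = i → t = 0) ∧
      ordW n d (P i + C t * P (c i)) = ordW n d (P (c i)) := by
    intro i
    by_cases hci : c i = i
    · exact ⟨0, fun _ => rfl, by rw [hci]; simp⟩
    · obtain ⟨t, _, ht⟩ := key (P i) (P (c i)) (hc_ord i)
      exact ⟨t, fun h => absurd h hci, ht⟩
  choose t ht0 htord using hkey
  have htc : ∀ i, t (c i) = 0 := fun i => ht0 (c i) (hcc i)
  -- the matrix
  set E : Matrix (Fin n) (Fin n) ℂ :=
    Matrix.of (fun i j => if j = c i then t i else 0) with hE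
  set A : Matrix (Fin n) (Fin n) ℂ := 1 + E with hA
  set B : Matrix (Fin n) (Fin n) ℂ := 1 - E with hB
  have hEE : E * E = 0 := by
    ext i k
    rw [Matrix.mul_apply]
    rw [Finset.sum_eq_single (c i)]
    · simp [hE, htc i]
    · intro b _ hb
      simp [hE, hb]
    · intro h; exact absurd (Finset.mem_univ _) h
  have hAB : A * B = 1 := by
    rw [hA, hB]
    noncomm_ring
    rw [hEE]
    simp
  have hBA : B * A = 1 := by
    rw [hA, hB]
    noncomm_ring
    rw [hEE]
    simp
  have hAblock : ∀ i j : Fin n, (i : ℕ) < d → d ≤ (j : ℕ) → A i j = 0 := by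
    intro i j hi hj
    have hij : i ≠ j := fun h => absurd (h ▸ hj) (not_le.mpr hi)
    have hjc : j ≠ c i := by
      rw [hcd i hi]
      exact fun h => absurd (h ▸ hj) (not_le.mpr hj0d)
    simp [hA, hE, Matrix.one_apply, hij, hjc]
  have hBblock : ∀ i j : Fin n, (i : ℕ) < d → d ≤ (j : ℕ) → B i j = 0 := by
    intro i j hi hj
    have hij : i ≠ j := fun h => absurd (h ▸ hj) (not_le.mpr hi)
    have hjc : j ≠ c i := by
      rw [hcd i hi]
      exact fun h => absurd (h ▸ hj) (not_le.mpr hj0d)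
    simp [hB, hE, Matrix.one_apply, hij, hjc]
  have hAinv : A⁻¹ = B := Matrix.inv_eq_right_inv hAB
  refine ⟨A, Matrix.isUnit_det_of_right_inverse hAB, hAblock, ?_⟩
  intro i
  rw [hAinv]
  have hordQ : ∀ R : MvPolynomial (Fin n) ℂ,
      ordW n d (aeval (σM B) R) = ordW n d R := by
    intro R
    refine le_antisymm ?_ (ordW_aeval B hBblock R)
    have hR : aeval (σM A) (aeval (σM B) R) = R := by
      rw [aeval_σM_comp, hBA]
      rw [show σM (1 : Matrix (Fin n) (Fin n) ℂ) = fun j => X j from funext σM_one]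
      exact aeval_X_left_apply R
    calc ordW n d (aeval (σM B) R)
        ≤ ordW n d (aeval (σM A) (aeval (σM B) R)) := ordW_aeval A hAblock _
      _ = ordW n d R := by rw [hR]
  have hrow : ∑ j : Fin n, C (A i j) * P j = P i + C (t i) * P (c i) := by
    have h1 : ∑ j : Fin n, C ((1 : Matrix (Fin n) (Fin n) ℂ) i j) * P j = P i := by
      rw [Finset.sum_eq_single i]
      · simp [Matrix.one_apply]
      · intro b _ hb
        simp [Matrix.one_apply, Ne.symm hb]
      · intro h; exact absurd (Finset.mem_univ _) h
    have h2 : ∑ j : Fin n, C (E i j) * P j = C (t i) * P (c i) := by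
      rw [Finset.sum_eq_single (c i)]
      · simp [hE]
      · intro b _ hb
        simp [hE, hb]
      · intro h; exact absurd (Finset.mem_univ _) h
    calc ∑ j : Fin n, C (A i j) * P j
        = ∑ j : Fin n, (C ((1 : Matrix (Fin n) (Fin n) ℂ) i j) * P j + C (E i j) * P j) := by
          refine Finset.sum_congr rfl fun j _ => ?_
          rw [hA, Matrix.add_apply, map_add, add_mul]
      _ = P i + C (t i) * P (c i) := by rw [Finset.sum_add_distrib, h1, h2]
  have hsum : ∑ j : Fin n, C (A i j) * aeval (σM B) (P j)
      = aeval (σM B) (∑ j : Fin n, C (A i j) * P j) := by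
    rw [map_sum]
    refine Finset.sum_congr rfl fun j _ => ?_
    rw [map_mul, aeval_C, algebraMap_eq]
  show ordW n d (∑ j : Fin n, C (A i j) * aeval (σM B) (P j)) = _
  rw [hsum, hordQ, hrow, htord i]
  exact htarget i
end
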